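/- Let n ∈ ℕ and let a₁, …, aₙ be positive integers. Then for every finite coloring χ : ℤ → {1,…,r} there exist k ∈ ℕ, positive integers x, b₁, …, b_k, and a color t such that all the elements x, b₁, …, b_k, ∏_{i=1}^{k} bᵢ, and x·a_j^{b₁+⋯+b_k} for 1 ≤ j ≤ n, receive color t under χ. -/

import Mathlib

open Filter

attribute [local instance] Ultrafilter.mul Ultrafilter.add Ultrafilter.semigroup
  Ultrafilter.addSemigroup

namespace Stmt8

abbrev M := ℕ+

/-- Membership in a product of ultrafilters. -/
lemma mem_mul {U V : Ultrafilter M} {A : Set M} :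
    A ∈ U * V ↔ {x : M | {y : M | x * y ∈ A} ∈ V} ∈ U := by
  have h := Ultrafilter.eventually_mul U V (· ∈ A)
  simpa [Filter.eventually_iff] using h

lemma pure_one_mul (z : Ultrafilter M) : (pure 1 : Ultrafilter M) * z = z := by
  apply Ultrafilter.coe_inj.mp
  apply Filter.ext'
  intro p
  simp [Ultrafilter.eventually_mul]

end Stmt8

namespace Stmt8

open Hindman

/-- Sum of a nonempty finset of positive naturals, as a positive natural. -/
def psum {ι : Type*} (s : Finset ι) (w : ι → M) (hs : s.Nonempty) : M :=
  ⟨∑ i ∈ s, (w i : ℕ), Finset.sum_pos (fun i _ => (w i).pos) hs⟩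

lemma psum_coe {ι : Type*} (s : Finset ι) (w : ι → M) (hs : s.Nonempty) :
    (psum s w hs : ℕ) = ∑ i ∈ s, (w i : ℕ) := rfl

lemma FS_get (a : Stream' M) (m : ℕ) : a.get m ∈ FS a := by
  induction m generalizing a with
  | zero => exact FS.head a
  | succ k ih => exact FS.tail a _ (ih a.tail)

lemma FS_drop_subset (a : Stream' M) (m : ℕ) : FS (a.drop m) ⊆ FS a := by
  induction m with
  | zero => simp [Stream'.drop]
  | succ k ih =>
      intro x hx
      apply ih
      exact FS.tail (a.drop k) x (by rwa [Stream'.tail_drop'])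

/-- Any sum over a nonempty finite set of indices of a stream is a finite sum. -/
lemma FS_finsetSum_aux :
    ∀ (n : ℕ) (a : Stream' M) (s : Finset ℕ) (hs : s.Nonempty), s.card ≤ n →
      psum s a.get hs ∈ FS a := by
  intro n
  induction n with
  | zero =>
    intro a s hs hcard
    exact absurd (Finset.card_eq_zero.mp (Nat.le_zero.mp hcard)) (Finset.nonempty_iff_ne_empty.mp hs)
  | succ n ih =>
    intro a s hs hcard
    obtain ⟨m, hmem, hmin⟩ : ∃ m ∈ s, ∀ x ∈ s, m ≤ x :=
      ⟨s.min' hs, Finset.min'_mem s hs, fun x hx => Finset.min'_le s x hx⟩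
    rcases Finset.eq_empty_or_nonempty (s.erase m) with h1 | h2
    · -- s = {m}
      have hs1 : s = {m} := by
        apply Finset.eq_singleton_iff_unique_mem.mpr
        refine ⟨hmem, fun x hx => ?_⟩
        by_contra hne
        exact (Finset.ne_empty_of_mem (Finset.mem_erase.mpr ⟨hne, hx⟩)) h1
      have : psum s a.get hs = a.get m := by
        apply PNat.eq
        show (∑ i ∈ s, (a.get i : ℕ)) = _
        rw [hs1, Finset.sum_singleton]
      rw [this]
      exact FS_get a m
    · -- decompose: sum = a.get m + rest
      have hsub : s.erase m ⊂ s := Finset.erase_ssubset hmem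
      -- reindex the erased set by subtracting (m+1)
      set s' : Finset ℕ := (s.erase m).image (fun i => i - (m+1)) with hs'
      have hinj : ∀ i ∈ s.erase m, ∀ j ∈ s.erase m,
          i - (m+1) = j - (m+1) → i = j := by
        intro i hi j hj hij
        have hi' : m < i := lt_of_le_of_ne (hmin i (Finset.mem_of_mem_erase hi))
          (Ne.symm (Finset.ne_of_mem_erase hi))
        have hj' : m < j := lt_of_le_of_ne (hmin j (Finset.mem_of_mem_erase hj))
          (Ne.symm (Finset.ne_of_mem_erase hj))
        omega
      have hs'ne : s'.Nonempty := h2.image _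
      have key : psum s' ((a.drop (m+1)).get) hs'ne ∈ FS (a.drop (m+1)) := by
        apply ih
        have h1 : s'.card ≤ (s.erase m).card := Finset.card_image_le
        have h2 : (s.erase m).card < s.card := Finset.card_lt_card hsub
        omega
      have hrest : (psum s' ((a.drop (m+1)).get) hs'ne : ℕ) = ∑ i ∈ s.erase m, (a.get i : ℕ) := by
        show (∑ i ∈ s', ((a.drop (m+1)).get i : ℕ)) = _
        rw [hs', Finset.sum_image hinj]
        apply Finset.sum_congr rfl
        intro i hi
        have hi' : m < i := lt_of_le_of_ne (hmin i (Finset.mem_of_mem_erase hi))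
          (Ne.symm (Finset.ne_of_mem_erase hi))
        rw [Stream'.get_drop]
        have heq : m + 1 + (i - (m+1)) = i := by omega
        rw [heq]
      have hdecomp : psum s a.get hs = a.get m + psum s' ((a.drop (m+1)).get) hs'ne := by
        apply PNat.eq
        rw [PNat.add_coe, hrest]
        show (∑ i ∈ s, (a.get i : ℕ)) = _
        rw [← Finset.add_sum_erase s _ hmem]
      rw [hdecomp]
      apply FS_drop_subset a m
      have hhead : a.get m = (a.drop m).head := by
        rw [Stream'.head_drop]
      rw [hhead]
      apply FS.cons
      rw [Stream'.tail_drop']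
      exact key

end Stmt8

namespace Stmt8

lemma FS_finsetSum (a : Stream' Stmt8.M) (s : Finset ℕ) (hs : s.Nonempty) :
    psum s a.get hs ∈ Hindman.FS a :=
  FS_finsetSum_aux s.card a s hs le_rfl

end Stmt8

namespace Stmt8

/-- Translated FS-structure in members of `q * p₀` for `p₀` an additive idempotent. -/
lemma exists_mul_FS {p₀ q : Ultrafilter M} (hp₀ : p₀ + p₀ = p₀) {T : Set M} (hT : T ∈ q * p₀) :
    ∃ x : M, ∃ a : Stream' M, ∀ (s : Finset ℕ) (hs : s.Nonempty), x * psum s a.get hs ∈ T := by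
  rw [mem_mul] at hT
  obtain ⟨x, hx⟩ := Ultrafilter.nonempty_of_mem hT
  obtain ⟨a, ha⟩ := Hindman.exists_FS_of_large p₀ hp₀ _ hx
  exact ⟨x, a, fun s hs => ha (FS_finsetSum a s hs)⟩

/-- Left ideals contained in the principal left ideal generated by `p₀`. -/
def IsLI (p₀ : Ultrafilter M) (N : Set (Ultrafilter M)) : Prop :=
  N.Nonempty ∧ IsClosed N ∧ N ⊆ Set.range (· * p₀) ∧
    ∀ u : Ultrafilter M, ∀ x ∈ N, u * x ∈ N

lemma isLI_L0 (p₀ : Ultrafilter M) : IsLI p₀ (Set.range (· * p₀)) := by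
  refine ⟨⟨p₀ * p₀, ⟨p₀, rfl⟩⟩, (isCompact_range (Ultrafilter.continuous_mul_left p₀)).isClosed,
    le_refl _, ?_⟩
  rintro u x ⟨v, rfl⟩
  exact ⟨u * v, by simpa using mul_assoc u v p₀⟩

lemma exists_minimal_LI (p₀ : Ultrafilter M) : ∃ L, Minimal (IsLI p₀) L := by
  apply zorn_superset
  intro c hcs hc
  rcases c.eq_empty_or_nonempty with rfl | hcne
  · exact ⟨Set.range (· * p₀), isLI_L0 p₀, by simp⟩
  refine ⟨⋂₀ c, ⟨?_, ?_, ?_, ?_⟩, fun s hs => Set.sInter_subset_of_mem hs⟩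
  · convert IsCompact.nonempty_iInter_of_directed_nonempty_isCompact_isClosed
      (ι := c) (fun i => (i : Set (Ultrafilter M)))
      (DirectedOn.directed_val (IsChain.directedOn hc.symm))
      (fun i => (hcs i.prop).1) (fun i => (hcs i.prop).2.1.isCompact)
      (fun i => (hcs i.prop).2.1)
    · exact Set.sInter_eq_iInter
    · exact hcne.coe_sort
  · exact isClosed_sInter fun t ht => (hcs ht).2.1
  · obtain ⟨t, ht⟩ := hcne
    exact (Set.sInter_subset_of_mem ht).trans (hcs ht).2.2.1
  · intro u x hx
    rw [Set.mem_sInter] at hx ⊢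
    exact fun t ht => (hcs ht).2.2.2 u x (hx t ht)

lemma minimal_absorb {p₀ : Ultrafilter M} {L : Set (Ultrafilter M)}
    (hL : Minimal (IsLI p₀) L) {p z : Ultrafilter M} (hp : p ∈ L) (hz : z ∈ L) :
    ∃ v : Ultrafilter M, v * z = p := by
  have hN : IsLI p₀ (Set.range (· * z)) := by
    refine ⟨⟨(pure 1 : Ultrafilter M) * z, ⟨pure 1, rfl⟩⟩,
      (isCompact_range (Ultrafilter.continuous_mul_left z)).isClosed, ?_, ?_⟩
    · rintro x ⟨v, rfl⟩
      exact hL.prop.2.2.1 (hL.prop.2.2.2 v z hz)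
    · rintro u x ⟨v, rfl⟩
      exact ⟨u * v, by simpa using mul_assoc u v z⟩
  have hNL : Set.range (· * z) ⊆ L := by
    rintro x ⟨v, rfl⟩
    exact hL.prop.2.2.2 v z hz
  have := hL.2 hN hNL hp
  exact this

/-- Key syndeticity: for `p` in a minimal left ideal and `T ∈ p`, the set of divided
translates of `T` is (left) syndetic. -/
lemma syndetic {p₀ : Ultrafilter M} {L : Set (Ultrafilter M)}
    (hL : Minimal (IsLI p₀) L) {p : Ultrafilter M} (hp : p ∈ L) {T : Set M} (hT : T ∈ p) :
    ∃ F : Finset M, ∀ z : M, ∃ f ∈ F, {y : M | (f * z) * y ∈ T} ∈ p := by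
  by_contra hcon
  push_neg at hcon
  classical
  set R : Set M := {x | {y : M | x * y ∈ T} ∈ p} with hR
  have hcon' : ∀ F : Finset M, ∃ z, ∀ f ∈ F, f * z ∉ R := by
    intro F
    obtain ⟨z, hz⟩ := hcon F
    exact ⟨z, fun f hf => hz f hf⟩
  -- build an ultrafilter containing all sets {z | f * z ∉ R}
  have hFIP : ∀ Tfin : Finset (Set M), (↑Tfin : Set (Set M)) ⊆
      (Set.range fun f : M => {z | f * z ∉ R}) → (⋂₀ (↑Tfin : Set (Set M))).Nonempty := by
    intro Tfin hTfin
    set fc : Set M → M := fun B => if h : ∃ f : M, B = {z | f * z ∉ R} then h.choose else 1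
      with hfc
    obtain ⟨z, hz⟩ := hcon' (Tfin.image fc)
    refine ⟨z, ?_⟩
    rw [Set.mem_sInter]
    intro B hB
    have hBmem : B ∈ Tfin := by exact_mod_cast hB
    have hBr : ∃ f : M, B = {z | f * z ∉ R} := by
      obtain ⟨f, hf⟩ := Set.mem_range.mp (hTfin hB)
      exact ⟨f, hf.symm⟩
    have hfcB : B = {z | fc B * z ∉ R} := by
      rw [hfc]
      simp only [hBr, dif_pos]
      exact hBr.choose_spec
    rw [hfcB]
    exact hz (fc B) (Finset.mem_image_of_mem fc hBmem)
  obtain ⟨q, hq⟩ := Ultrafilter.exists_ultrafilter_of_finite_inter_nonempty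
      (Set.range fun f : M => {z | f * z ∉ R}) hFIP
  -- get v with v * (q * p) = p
  obtain ⟨v, hv⟩ := minimal_absorb hL hp (hL.prop.2.2.2 q p hp)
  rw [← hv, mem_mul] at hT
  obtain ⟨x, hx⟩ := Ultrafilter.nonempty_of_mem hT
  simp only [Set.mem_setOf_eq] at hx
  rw [mem_mul] at hx
  have h1 : {y : M | x * y ∈ R} ∈ q := by
    apply Filter.mem_of_superset hx
    intro y hy
    simp only [Set.mem_setOf_eq] at hy ⊢
    rw [hR]
    simp only [Set.mem_setOf_eq]
    convert hy using 2
    ext z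
    rw [mul_assoc]
  have h2 : {y : M | x * y ∉ R} ∈ q := by
    have : {z : M | x * z ∉ R} ∈ Set.range fun f : M => {z | f * z ∉ R} := ⟨x, rfl⟩
    exact hq this
  have := Filter.inter_mem h1 h2
  have hempty : {y : M | x * y ∈ R} ∩ {y : M | x * y ∉ R} = ∅ := by
    ext y; simp only [Set.mem_inter_iff, Set.mem_setOf_eq, Set.mem_empty_iff_false]
    tauto
  rw [hempty] at this
  exact (Filter.empty_notMem (q : Filter M)) this

end Stmt8

namespace Stmt8

lemma thick_of_synd {p : Ultrafilter M} {T : Set M} {F : Finset M}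
    (hF : ∀ z : M, ∃ f ∈ F, {y : M | (f * z) * y ∈ T} ∈ p) (E : Finset M) :
    ∃ u : M, ∀ e ∈ E, ∃ f ∈ F, (f * e) * u ∈ T := by
  choose f hfF hfmem using hF
  have hbi : (⋂ e ∈ E, {y : M | (f e * e) * y ∈ T}) ∈ p :=
    (Filter.biInter_finset_mem E).mpr fun e _ => hfmem e
  obtain ⟨u, hu⟩ := Ultrafilter.nonempty_of_mem hbi
  refine ⟨u, fun e he => ⟨f e, hfF e, ?_⟩⟩
  simp only [Set.mem_iInter] at hu
  exact hu e he

lemma exists_add_idem : ∃ p₀ : Ultrafilter M, p₀ + p₀ = p₀ :=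
  exists_idempotent_of_compact_t2_of_continuous_add_left Ultrafilter.continuous_add_left

lemma exists_color_class {r : ℕ} (χ' : M → Fin r) (p : Ultrafilter M) :
    ∃ t : Fin r, {z : M | χ' z = t} ∈ p := by
  have hfin : (Set.range fun t : Fin r => {z : M | χ' z = t}).Finite := Set.finite_range _
  have hcov : ⋃₀ (Set.range fun t : Fin r => {z : M | χ' z = t}) ∈ p := by
    have : ⋃₀ (Set.range fun t : Fin r => {z : M | χ' z = t}) = Set.univ := by
      apply Set.eq_univ_of_forall
      intro z
      exact ⟨{z' : M | χ' z' = χ' z}, ⟨χ' z, rfl⟩, rfl⟩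
    rw [this]
    exact Filter.univ_mem
  obtain ⟨c, hcs, hc⟩ := (Ultrafilter.finite_sUnion_mem_iff hfin).mp hcov
  obtain ⟨t, rfl⟩ := hcs
  exact ⟨t, hc⟩

/-- The key combinatorial theorem: a monochromatic pattern `{x, d, x * Aⱼ ^ d}`. -/
theorem key (n r : ℕ) (A : Fin n → M) (χ' : M → Fin r) :
    ∃ t : Fin r, ∃ x d : M, χ' x = t ∧ χ' d = t ∧
      ∀ j : Fin n, χ' (x * (A j) ^ (d : ℕ)) = t := by
  classical
  obtain ⟨p₀, hp₀⟩ := exists_add_idem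
  obtain ⟨L, hL⟩ := exists_minimal_LI p₀
  obtain ⟨p, hp⟩ := hL.prop.1
  obtain ⟨t, hT⟩ := exists_color_class χ' p
  set T : Set M := {z : M | χ' z = t} with hTdef
  -- syndeticity data
  obtain ⟨F, hF⟩ := syndetic hL hp hT
  -- Hales-Jewett
  obtain ⟨ι, ιfin, hHJ⟩ :=
    Combinatorics.Line.exists_mono_in_high_dimension (Option (Fin n)) (↥F)
  -- the FS data
  obtain ⟨q, hq⟩ := hL.prop.2.2.1 hp
  have hT' : T ∈ q * p₀ := by rw [show q * p₀ = p from hq]; exact hT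
  obtain ⟨x₀, a, hxa⟩ := exists_mul_FS hp₀ hT'
  let e : ι ≃ Fin (Fintype.card ι) := Fintype.equivFin ι
  let w : ι → M := fun i => x₀ * a.get (e i)
  have hw : ∀ (s : Finset ι) (hs : s.Nonempty), psum s w hs ∈ T := by
    intro s hs
    have hinj : ∀ i ∈ s, ∀ j ∈ s, ((e i : Fin _) : ℕ) = ((e j : Fin _) : ℕ) → i = j := by
      intro i _ j _ hij
      exact e.injective (Fin.val_injective hij)
    have hne : (s.image fun i => ((e i : Fin _) : ℕ)).Nonempty := hs.image _
    have heq : psum s w hs = x₀ * psum (s.image fun i => ((e i : Fin _) : ℕ)) a.get hne := by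
      apply PNat.eq
      rw [PNat.mul_coe]
      show (∑ i ∈ s, ((x₀ * a.get (e i) : ℕ+) : ℕ)) = _
      rw [Finset.sum_congr rfl (fun i _ => PNat.mul_coe x₀ (a.get (e i))), ← Finset.mul_sum]
      congr 1
      show _ = ∑ h ∈ s.image fun i => ((e i : Fin _) : ℕ), (a.get h : ℕ)
      rw [Finset.sum_image hinj]
    rw [heq]
    exact hxa _ hne
  -- evaluation of words
  let g : Option (Fin n) → ι → M := fun o i =>
    match o with
    | none => 1
    | some j => (A j) ^ ((w i : ℕ))
  let V : (ι → Option (Fin n)) → M := fun word => ∏ i, g (word i) i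
  let E : Finset M := Finset.image V Finset.univ
  obtain ⟨u, hu⟩ := thick_of_synd hF E
  have hκ : ∀ word : ι → Option (Fin n), ∃ f ∈ F, (f * V word) * u ∈ T := fun word =>
    hu (V word) (Finset.mem_image_of_mem V (Finset.mem_univ word))
  choose κf hκF hκT using hκ
  obtain ⟨l, c₀, hl⟩ := hHJ fun word => (⟨κf word, hκF word⟩ : ↥F)
  -- wildcard set
  set s : Finset ι := Finset.univ.filter (fun i => l.idxFun i = none) with hsdef
  have hs : s.Nonempty := by
    obtain ⟨i, hi⟩ := l.proper
    exact ⟨i, by simp [hsdef, hi]⟩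
  set d : M := psum s w hs with hddef
  have hd : d ∈ T := hw s hs
  set R₀ : M := ∏ i ∈ sᶜ, g ((l.idxFun i).getD none) i with hR₀def
  have hVsplit : ∀ x : Option (Fin n), V (l x) = (∏ i ∈ s, g x i) * R₀ := by
    intro x
    show (∏ i, g (l x i) i) = _
    rw [← Finset.prod_mul_prod_compl s]
    congr 1
    · apply Finset.prod_congr rfl
      intro i hi
      have hnone : l.idxFun i = none := by
        have := (Finset.mem_filter.mp (by rwa [hsdef] at hi)).2
        exact this
      rw [Combinatorics.Line.apply_none l x i hnone]
    · apply Finset.prod_congr rfl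
      intro i hi
      have hnn : l.idxFun i ≠ none := by
        rw [hsdef] at hi
        simpa using (Finset.mem_compl.mp hi)
      obtain ⟨o, ho⟩ := Option.ne_none_iff_exists'.mp hnn
      rw [Combinatorics.Line.apply_some ho, ho]
      rfl
  have hmono : ∀ x : Option (Fin n), κf (l x) = (c₀ : M) := fun x =>
    congrArg Subtype.val (hl x)
  have hval : ∀ x : Option (Fin n), ((c₀ : M) * V (l x)) * u ∈ T := by
    intro x
    have := hκT (l x)
    rwa [hmono x] at this
  -- the two evaluations
  have hVnone : V (l none) = R₀ := by
    rw [hVsplit none]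
    have h1 : (∏ i ∈ s, g none i) = 1 := by
      apply Finset.prod_eq_one
      intro i _
      rfl
    rw [h1, one_mul]
  have hVsome : ∀ j : Fin n, V (l (some j)) = (A j) ^ ((d : ℕ)) * R₀ := by
    intro j
    rw [hVsplit (some j)]
    congr 1
    show (∏ i ∈ s, (A j) ^ ((w i : ℕ))) = _
    rw [Finset.prod_pow_eq_pow_sum]
    rfl
  refine ⟨t, ((c₀ : M) * R₀) * u, d, ?_, hd, ?_⟩
  · have := hval none
    rwa [hVnone] at this
  · intro j
    have := hval (some j)
    rw [hVsome j] at this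
    have heq : ((c₀ : M) * ((A j) ^ ((d : ℕ)) * R₀)) * u
        = (((c₀ : M) * R₀) * u) * (A j) ^ ((d : ℕ)) := by
      rw [mul_comm ((A j) ^ ((d : ℕ))) R₀, ← mul_assoc, mul_assoc _ _ u,
        mul_comm ((A j) ^ ((d : ℕ))) u, ← mul_assoc]
    rwa [heq] at this

end Stmt8



/-- For any positive integers `a₁, …, aₙ` and any finite coloring of `ℤ`, there are `k`,
positive integers `x, b₁, …, b_k` such that `x`, the `bᵢ`'s, `∏ bᵢ` and all
`x·a_j^{b₁+⋯+b_k}` receive the same color. -/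
theorem stmt8 (n r : ℕ) (a : Fin n → ℕ) (ha : ∀ j, 0 < a j) (χ : ℤ → Fin r) :
    ∃ K : ℕ, 0 < K ∧ ∃ x : ℕ, 0 < x ∧ ∃ b : Fin K → ℕ, (∀ i, 0 < b i) ∧
      ∃ t : Fin r,
        χ (x : ℤ) = t ∧
        (∀ i : Fin K, χ (b i : ℤ) = t) ∧
        χ ((∏ i, b i : ℕ) : ℤ) = t ∧
        ∀ j : Fin n, χ ((x * a j ^ (∑ i, b i) : ℕ) : ℤ) = t := by
  rcases Nat.eq_zero_or_pos r with rfl | hr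
  · exact (χ 0).elim0
  let A : Fin n → Stmt8.M := fun j => ⟨a j, ha j⟩
  let χ' : Stmt8.M → Fin r := fun z => χ ((z : ℕ) : ℤ)
  obtain ⟨t, x, d, hx, hd, hxd⟩ := Stmt8.key n r A χ'
  refine ⟨1, one_pos, (x : ℕ), x.pos, fun _ => (d : ℕ), fun _ => d.pos, t, hx, fun _ => hd, ?_, ?_⟩
  · have hprod : (∏ _i : Fin 1, (d : ℕ)) = (d : ℕ) := by simp
    rw [hprod]
    exact hd
  · intro j
    have hsum : (∑ _i : Fin 1, (d : ℕ)) = (d : ℕ) := by simp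
    rw [hsum]
    have := hxd j
    have hcoe : ((x * (A j) ^ ((d : ℕ)) : ℕ+) : ℕ) = (x : ℕ) * (a j) ^ ((d : ℕ)) := by
      rw [PNat.mul_coe, PNat.pow_coe]
      rfl
    show χ (((x : ℕ) * a j ^ ((d : ℕ)) : ℕ) : ℤ) = t
    rw [← hcoe]
    exact this
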